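/- Let F: ℝ^d → ℝ be μ-strongly convex and differentiable, λ > 0, y ∈ ℝ^d, and let x*_{λ,y} be the minimizer of F_{λ,y}(x) = F(x) + λ‖x − y‖₂². Then ‖∇F(x*_{λ,y})‖₂ ≤ (2λ/(μ + 2λ)) ‖∇F(y)‖₂. -/
import Mathlib


open scoped RealInnerProductSpace

/-- For a μ-strongly convex differentiable `F`, the gradient of `F` at the minimizer of
the proximal function `F(x) + λ‖x − y‖²` satisfies
`‖∇F(x*_{λ,y})‖ ≤ (2λ/(μ + 2λ)) ‖∇F(y)‖`. -/
theorem stmt_6 {d : ℕ} (F : EuclideanSpace ℝ (Fin d) → ℝ)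
    (F' : EuclideanSpace ℝ (Fin d) → EuclideanSpace ℝ (Fin d))
    (hgrad : ∀ x, HasGradientAt F (F' x) x) (μ : ℝ) (hμ : 0 < μ)
    (hsc : ∀ x z : EuclideanSpace ℝ (Fin d),
      F x + ⟪F' x, z - x⟫ + μ / 2 * ‖z - x‖ ^ 2 ≤ F z)
    (lam : ℝ) (hlam : 0 < lam) (y xs : EuclideanSpace ℝ (Fin d))
    (hmin : IsMinOn (fun x => F x + lam * ‖x - y‖ ^ 2) Set.univ xs) :
    ‖F' xs‖ ≤ (2 * lam / (μ + 2 * lam)) * ‖F' y‖ := by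
  -- derivative of the proximal objective at xs
  have hq : HasFDerivAt (fun x : EuclideanSpace ℝ (Fin d) => ‖x - y‖ ^ 2)
      (2 • (innerSL ℝ (xs - y)).comp
        (ContinuousLinearMap.id ℝ (EuclideanSpace ℝ (Fin d)))) xs := by
    simpa using ((hasFDerivAt_id xs).sub_const y).norm_sq
  have hG : HasFDerivAt (fun x => F x + lam * ‖x - y‖ ^ 2)
      ((InnerProductSpace.toDual ℝ _ (F' xs) : _ →L[ℝ] ℝ) +
        lam • (2 • (innerSL ℝ (xs - y)).comp
          (ContinuousLinearMap.id ℝ (EuclideanSpace ℝ (Fin d))))) xs :=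
    ((hgrad xs).hasFDerivAt).add (hq.const_smul lam)
  have hloc : IsLocalMin (fun x => F x + lam * ‖x - y‖ ^ 2) xs := by
    apply hmin.isLocalMin
    exact Filter.univ_mem
  have hD0 : ((InnerProductSpace.toDual ℝ _ (F' xs) : _ →L[ℝ] ℝ) +
        lam • (2 • (innerSL ℝ (xs - y)).comp
          (ContinuousLinearMap.id ℝ (EuclideanSpace ℝ (Fin d))))) = 0 := by
    rw [← hG.fderiv]; exact hloc.fderiv_eq_zero
  -- hence F' xs = 2λ (y - xs)
  have hkey : F' xs = (2 * lam) • (y - xs) := by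
    apply ext_inner_right ℝ
    intro v
    have := congrArg (fun L => L v) hD0
    simp only [ContinuousLinearMap.add_apply, ContinuousLinearMap.smul_apply,
      ContinuousLinearMap.coe_smul', Pi.smul_apply, ContinuousLinearMap.coe_comp',
      Function.comp_apply, ContinuousLinearMap.coe_id', id_eq, innerSL_apply_apply,
      InnerProductSpace.toDual_apply_apply, ContinuousLinearMap.zero_apply, smul_eq_mul] at this
    rw [real_inner_smul_left, inner_sub_left]
    have h2 : ⟪xs - y, v⟫ = ⟪xs, v⟫ - ⟪y, v⟫ := inner_sub_left _ _ _
    rw [nsmul_eq_mul] at this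
    push_cast at this
    linear_combination this - 2 * lam * h2
  have hnxs : ‖F' xs‖ = 2 * lam * ‖y - xs‖ := by
    rw [hkey, norm_smul, Real.norm_eq_abs, abs_of_pos (by linarith : (0:ℝ) < 2 * lam)]
  -- strong convexity two ways
  have h1 := hsc xs y
  have h2 := hsc y xs
  have hnorm : ‖xs - y‖ = ‖y - xs‖ := norm_sub_rev _ _
  have hip : ⟪F' xs, y - xs⟫ = 2 * lam * ‖y - xs‖ ^ 2 := by
    rw [hkey, real_inner_smul_left, real_inner_self_eq_norm_sq]
  rw [hnorm] at h2
  have hmono : ⟪F' y, y - xs⟫ ≥ (μ + 2 * lam) * ‖y - xs‖ ^ 2 := by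
    have hneg : ⟪F' y, xs - y⟫ = -⟪F' y, y - xs⟫ := by
      rw [← inner_neg_right]; congr 1; abel
    rw [hneg] at h2
    linarith
  have hCS : ⟪F' y, y - xs⟫ ≤ ‖F' y‖ * ‖y - xs‖ := real_inner_le_norm _ _
  have hpos : (0:ℝ) < μ + 2 * lam := by linarith
  clear hq hG hD0 hloc hmin hgrad hsc hkey hip h1 h2 hnorm
  rcases eq_or_lt_of_le (norm_nonneg (y - xs)) with h0 | h0
  · rw [hnxs, ← h0]
    have : (0:ℝ) ≤ 2 * lam / (μ + 2 * lam) * ‖F' y‖ := by positivity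
    linarith
  · have hb : (μ + 2 * lam) * ‖y - xs‖ ≤ ‖F' y‖ := by
      nlinarith [hmono, hCS, h0]
    rw [hnxs, div_mul_eq_mul_div, le_div_iff₀ hpos]
    nlinarith [hb, hlam]
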